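/- Let (C, ω, τ) be a noncommutative probability space with tracial weight, and let (A, B) be cyclically monotone ∗-subalgebras with 1 ∈ B. Let a_1,…,a_k ∈ A and self-adjoint b_1,…,b_k ∈ B. Then for every n ∈ ℕ: ω((∑_{i=1}^k a_i b_i a_i^∗)^n) = ω((∑_{i=1}^k τ(b_i) a_i a_i^∗)^n). -/

import Mathlib

open scoped ComplexOrder

private lemma list_smul_prod' {C : Type*} [Ring C] [Algebra ℂ C] {ι : Type*}
    (c : ι → ℂ) (x : ι → C) :
    ∀ l : List ι, (l.map (fun i => c i • x i)).prod = (l.map c).prod • (l.map x).prod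
  | [] => by simp
  | i :: l => by
    simp only [List.map_cons, List.prod_cons, list_smul_prod' c x l, smul_mul_smul_comm]

private lemma pow_expand' {C : Type*} [Ring C] {k : ℕ} (x : Fin k → C) :
    ∀ n : ℕ, (∑ i, x i) ^ n = ∑ p : Fin n → Fin k, (List.ofFn (fun j => x (p j))).prod
  | 0 => by simp
  | n + 1 => by
    rw [pow_succ', pow_expand' x n, Finset.sum_mul_sum,
      ← (Fin.consEquiv (fun _ : Fin (n + 1) => Fin k)).sum_comp
        (fun p => (List.ofFn (fun j => x (p j))).prod),
      Fintype.sum_prod_type]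
    refine Finset.sum_congr rfl fun i _ => Finset.sum_congr rfl fun p _ => ?_
    simp [Fin.consEquiv, List.ofFn_succ]

private lemma teleA' {C : Type*} [Ring C] (u v s : ℕ → C) :
    ∀ n : ℕ, ((List.range (n + 1)).map (fun i => u i * v i * s i)).prod
      = u 0 * ((List.range n).map (fun i => v i * (s i * u (i + 1)))).prod * (v n * s n)
  | 0 => by simp [List.range_succ, mul_assoc]
  | n + 1 => by
    rw [List.range_succ, List.map_append, List.prod_append, teleA' u v s n]
    simp [List.range_succ, mul_assoc]

private lemma teleB' {C : Type*} [Ring C] (u v s : ℕ → C) :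
    ∀ m : ℕ, v 0 * ((List.range m).map (fun j => s j * u (j + 1) * v (j + 1))).prod
      = ((List.range m).map (fun j => v j * (s j * u (j + 1)))).prod * v m
  | 0 => by simp
  | m + 1 => by
    rw [List.range_succ, List.map_append, List.prod_append, ← mul_assoc, teleB' u v s m]
    simp [List.range_succ, mul_assoc]

private lemma teleC' {C : Type*} [Ring C] (u s : ℕ → C) :
    ∀ m : ℕ, u 0 * ((List.range m).map (fun j => s j * u (j + 1))).prod
      = ((List.range m).map (fun j => u j * s j)).prod * u m
  | 0 => by simp
  | m + 1 => by
    rw [List.range_succ, List.map_append, List.prod_append, ← mul_assoc, teleC' u s m]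
    simp [List.range_succ, mul_assoc]

private lemma ofFn_prod_eq' {C : Type*} [Monoid C] {n : ℕ} (f : Fin n → C) (g : ℕ → C)
    (h : ∀ j : Fin n, g j = f j) :
    (List.ofFn f).prod = ((List.range n).map g).prod := by
  have hfr : (List.finRange n).map (fun i : Fin n => (i : ℕ)) = List.range n := by
    apply List.ext_getElem <;> simp
  rw [List.ofFn_eq_map, ← hfr, List.map_map]
  exact congrArg List.prod (List.map_congr_left fun j _ => (h j).symm)

theorem sum_aba_cyclic_monotone
    {C : Type*} [Ring C] [StarRing C] [Algebra ℂ C] [StarModule ℂ C]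
    (A : NonUnitalStarSubalgebra ℂ C) (B : StarSubalgebra ℂ C)
    (ω τ : C →ₗ[ℂ] ℂ)
    (hτ1 : τ 1 = 1)
    (hτtr : ∀ x y : C, τ (x * y) = τ (y * x))
    (hτstar : ∀ x : C, τ (star x) = starRingEnd ℂ (τ x))
    (hτpos : ∀ x : C, 0 ≤ τ (star x * x))
    (hωtr : ∀ x y : C, ω (x * y) = ω (y * x))
    (hcm : ∀ (n : ℕ) (a b : ℕ → C), 1 ≤ n → (∀ i, a i ∈ A) → (∀ i, b i ∈ B) →
      ω (((List.range n).map (fun i => a i * b i)).prod)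
        = ω (((List.range n).map a).prod) * ∏ i ∈ Finset.range n, τ (b i))
    (k : ℕ) (a b : Fin k → C)
    (ha : ∀ i, a i ∈ A) (hb : ∀ i, b i ∈ B) (hbs : ∀ i, IsSelfAdjoint (b i))
    (n : ℕ) (hn : 1 ≤ n) :
    ω ((∑ i, a i * b i * star (a i)) ^ n)
      = ω ((∑ i, τ (b i) • (a i * star (a i))) ^ n) := by
  obtain ⟨m, rfl⟩ : ∃ m, n = m + 1 := ⟨n - 1, (Nat.succ_pred_eq_of_pos hn).symm⟩
  rw [pow_expand', pow_expand', map_sum, map_sum]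
  refine Finset.sum_congr rfl fun p _ => ?_
  have hmlt : ∀ i : ℕ, i % (m + 1) < m + 1 := fun i => Nat.mod_lt _ m.succ_pos
  set u : ℕ → C := fun i => a (p ⟨i % (m + 1), hmlt i⟩) with hu
  set v : ℕ → C := fun i => b (p ⟨i % (m + 1), hmlt i⟩) with hv
  have huj : ∀ j : Fin (m + 1), u j = a (p j) := fun j => by
    simp [hu, Nat.mod_eq_of_lt j.isLt]
  have hvj : ∀ j : Fin (m + 1), v j = b (p j) := fun j => by
    simp [hv, Nat.mod_eq_of_lt j.isLt]
  have hup : ∀ i, u (i + (m + 1)) = u i := fun i => by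
    simp [hu, Nat.add_mod_right]
  have hau : ∀ i, u i ∈ A := fun i => by rw [hu]; exact ha _
  have hbv : ∀ i, v i ∈ B := fun i => by rw [hv]; exact hb _
  -- rewrite LHS term
  rw [ofFn_prod_eq' (fun j => a (p j) * b (p j) * star (a (p j)))
    (fun i => u i * v i * star (u i)) (fun j => by simp only [huj j, hvj j])]
  -- rewrite RHS term
  have hsmul : (List.ofFn fun j : Fin (m + 1) => τ (b (p j)) • (a (p j) * star (a (p j)))).prod
      = (∏ j : Fin (m + 1), τ (b (p j)))
        • (List.ofFn fun j : Fin (m + 1) => a (p j) * star (a (p j))).prod := by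
    rw [List.ofFn_eq_map, list_smul_prod', ← List.ofFn_eq_map, ← List.ofFn_eq_map,
      List.prod_ofFn]
  rw [hsmul, map_smul, smul_eq_mul,
    ofFn_prod_eq' (fun j => a (p j) * star (a (p j)))
      (fun i => u i * star (u i)) (fun j => by simp only [huj j])]
  -- apply cyclic monotone independence
  have hshift : ∀ j : ℕ, u (j + 1 + m) = u j := fun j => by
    rw [Nat.add_assoc, Nat.add_comm 1 m]; exact hup j
  have key := hcm (m + 1) (fun i => star (u (i + m)) * u i) v (Nat.le_add_left 1 m)
    (fun i => mul_mem (star_mem (hau _)) (hau _)) (fun i => hbv i)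
  set Q : C := ((List.range m).map (fun i => v i * (star (u i) * u (i + 1)))).prod with hQdef
  set P : C := ((List.range m).map (fun i => u i * star (u i))).prod with hPdef
  -- LHS of key
  have e1 : ((List.range (m + 1)).map (fun i => (star (u (i + m)) * u i) * v i)).prod
      = star (u m) * (u 0 * (Q * v m)) := by
    rw [List.range_succ_eq_map, List.map_cons, List.prod_cons, List.map_map]
    have ht : (List.range m).map ((fun i => (star (u (i + m)) * u i) * v i) ∘ Nat.succ)
        = (List.range m).map (fun j => star (u j) * u (j + 1) * v (j + 1)) := by
      congr 1
      funext j
      simp [Function.comp, Nat.succ_eq_add_one, hshift j]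
    rw [ht]
    have := teleB' u v (fun i => star (u i)) m
    simp only [← hQdef] at this
    calc (star (u (0 + m)) * u 0) * v 0
          * ((List.range m).map (fun j => star (u j) * u (j + 1) * v (j + 1))).prod
        = star (u m) * (u 0 * (v 0
            * ((List.range m).map (fun j => star (u j) * u (j + 1) * v (j + 1))).prod)) := by
          rw [Nat.zero_add]; simp [mul_assoc]
      _ = star (u m) * (u 0 * (Q * v m)) := by rw [this]
  -- a-only product of key
  have e2 : ((List.range (m + 1)).map (fun i => star (u (i + m)) * u i)).prod
      = star (u m) * (u 0 * ((List.range m).map (fun j => star (u j) * u (j + 1))).prod) := by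
    rw [List.range_succ_eq_map, List.map_cons, List.prod_cons, List.map_map]
    have ht : (List.range m).map ((fun i => star (u (i + m)) * u i) ∘ Nat.succ)
        = (List.range m).map (fun j => star (u j) * u (j + 1)) := by
      congr 1
      funext j
      simp [Function.comp, Nat.succ_eq_add_one, hshift j]
    rw [ht, Nat.zero_add]
    simp [mul_assoc]
  rw [e1, e2] at key
  -- LHS of goal via teleA' and cyclicity
  have gL : ω (((List.range (m + 1)).map (fun i => u i * v i * star (u i))).prod)
      = ω (star (u m) * (u 0 * (Q * v m))) := by
    rw [teleA' u v (fun i => star (u i)) m, ← hQdef]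
    rw [show u 0 * Q * (v m * star (u m)) = (u 0 * (Q * v m)) * star (u m) by
      simp [mul_assoc]]
    rw [hωtr]
  -- a-only ω via teleC' and cyclicity
  have gR : ω (star (u m) * (u 0 * ((List.range m).map (fun j => star (u j) * u (j + 1))).prod))
      = ω (((List.range (m + 1)).map (fun i => u i * star (u i))).prod) := by
    rw [teleC' u (fun i => star (u i)) m, ← hPdef]
    rw [show star (u m) * (P * u m) = star (u m) * (P * u m) from rfl]
    rw [← mul_assoc, hωtr]
    rw [List.range_succ, List.map_append, List.prod_append, ← hPdef]
    simp only [List.map_cons, List.map_nil, List.prod_cons, List.prod_nil, mul_one]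
    rw [hωtr (u m) (star (u m) * P), mul_assoc, hωtr (star (u m)) (P * u m), mul_assoc]
  -- finset product conversion
  have e3 : (∏ i ∈ Finset.range (m + 1), τ (v i)) = ∏ j : Fin (m + 1), τ (b (p j)) := by
    rw [← Fin.prod_univ_eq_prod_range (fun i => τ (v i)) (m + 1)]
    exact Finset.prod_congr rfl fun j _ => by simp only [hvj j]
  rw [gL, key, gR, e3, mul_comm]
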